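/- Schlömilch's formula: for 1 ≤ k ≤ n, s₁(n,k) = Σ_{r=k−1}^{n−1} (−1)^{n−1−r} · binomial(2n−2−r, k−1) · binomial(2n−k, r+1−k) · s₂(2n−1−k−r, n−1−r). -/

import Mathlib

open Finset MvPolynomial

/-- The set of (n,k)-partition types: tuples (r₁,…,rₙ) (rⱼ = r (j-1)) with Σ rᵢ = k, Σ i·rᵢ = n. -/
def ptypes (n k : ℕ) : Finset (Fin n → ℕ) :=
  (Fintype.piFinset fun _ : Fin n => Finset.range (n + 1)).filter
    fun r => (∑ i, r i) = k ∧ (∑ i, (i.1 + 1) * r i) = n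

/-- Denominator of the Faà di Bruno coefficient: ∏ rᵢ!·(i!)^{rᵢ}. -/
def bruDenom {n : ℕ} (r : Fin n → ℕ) : ℕ :=
  ∏ i, (r i).factorial * ((i.1 + 1).factorial) ^ (r i)

/-- Partial exponential Bell polynomial (variable `X j` stands for X_{j+1}). -/
noncomputable def Bell (n k : ℕ) : MvPolynomial ℕ ℤ :=
  ∑ r ∈ ptypes n k,
    C ((n.factorial / bruDenom r : ℕ) : ℤ) * ∏ i, (X i.1 : MvPolynomial ℕ ℤ) ^ (r i)

/-- Associated Bell polynomial: Bell with X₁ (= `X 0`) set to 0. -/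
noncomputable def BellT (n k : ℕ) : MvPolynomial ℕ ℤ :=
  aeval (fun j => if j = 0 then 0 else (X j : MvPolynomial ℕ ℤ)) (Bell n k)

/-- Signed Stirling numbers of the first kind. -/
def s1 : ℕ → ℕ → ℤ
  | 0, 0 => 1
  | 0, _ + 1 => 0
  | _ + 1, 0 => 0
  | n + 1, k + 1 => s1 n k - n * s1 n (k + 1)

/-- Stirling numbers of the second kind. -/
def s2 : ℕ → ℕ → ℤ
  | 0, 0 => 1
  | 0, _ + 1 => 0
  | _ + 1, 0 => 0
  | n + 1, k + 1 => s2 n k + (k + 1) * s2 n (k + 1)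

/-- Unsigned Stirling numbers of the first kind (cycle numbers). -/
def cyc : ℕ → ℕ → ℕ
  | 0, 0 => 1
  | 0, _ + 1 => 0
  | _ + 1, 0 => 0
  | n + 1, k + 1 => cyc n k + n * cyc n (k + 1)

/-- First entry r₁ of a partition type (0 if the tuple is empty). -/
def firstEntry {m : ℕ} (r : Fin m → ℕ) : ℕ :=
  ∑ i ∈ Finset.univ.filter (fun i : Fin m => i.1 = 0), r i

/-- Multivariate Stirling polynomials of the first kind, via the differential recurrence. -/
noncomputable def Spoly : ℕ → ℕ → MvPolynomial ℕ ℤ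
  | 0, _ => 0
  | 1, k => if k = 1 then 1 else 0
  | n + 2, k =>
    if k = 0 then 0 else
      C (-(2 * (n : ℤ) + 1)) * X 1 * Spoly (n + 1) k
        + X 0 * (Spoly (n + 1) (k - 1)
          + ∑ j ∈ Finset.Icc 1 ((n + 1) - k + 1),
              X j * pderiv (j - 1) (Spoly (n + 1) k))

def W : ℕ → ℕ → ℕ
  | 0, 0 => 1
  | 0, _ + 1 => 0
  | 1, _ => 0
  | _ + 2, 0 => 0
  | n + 2, k + 1 => (k + 1) * W (n + 1) (k + 1) + (n + 1) * W n k

lemma W_pos_zero (n : ℕ) : W (n + 1) 0 = 0 := by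
  match n with
  | 0 => rfl
  | n + 1 => rfl

lemma W_eq_zero : ∀ n k, n < 2 * k → W n k = 0
  | 0, 0, h => by omega
  | 0, k + 1, _ => rfl
  | 1, 0, h => by omega
  | 1, k + 1, _ => rfl
  | n + 2, 0, h => by omega
  | n + 2, k + 1, h => by
    show (k + 1) * W (n + 1) (k + 1) + (n + 1) * W n k = 0
    rw [W_eq_zero (n + 1) (k + 1) (by omega), W_eq_zero n k (by omega)]
    ring




lemma s2_eq_zero : ∀ n k, n < k → s2 n k = 0
  | 0, 0, h => by omega
  | 0, k + 1, _ => rfl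
  | n + 1, 0, h => by omega
  | n + 1, k + 1, h => by
    show s2 n k + (k + 1 : ℤ) * s2 n (k + 1) = 0
    rw [s2_eq_zero n k (by omega), s2_eq_zero n (k + 1) (by omega)]
    ring

lemma cyc_eq_zero : ∀ n k, n < k → cyc n k = 0
  | 0, 0, h => by omega
  | 0, k + 1, _ => rfl
  | n + 1, 0, h => by omega
  | n + 1, k + 1, h => by
    show cyc n k + n * cyc n (k + 1) = 0
    rw [cyc_eq_zero n k (by omega), cyc_eq_zero n (k + 1) (by omega)]
    ring

lemma s2_self : ∀ n, s2 n n = 1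
  | 0 => rfl
  | n + 1 => by
    show s2 n n + (n + 1 : ℤ) * s2 n (n + 1) = 1
    rw [s2_self n, s2_eq_zero n (n + 1) (by omega)]
    ring

lemma cyc_self : ∀ n, cyc n n = 1
  | 0 => rfl
  | n + 1 => by
    show cyc n n + n * cyc n (n + 1) = 1
    rw [cyc_self n, cyc_eq_zero n (n + 1) (by omega)]
    ring

lemma s1_eq_zero : ∀ n k, n < k → s1 n k = 0
  | 0, 0, h => by omega
  | 0, k + 1, _ => rfl
  | n + 1, 0, h => by omega
  | n + 1, k + 1, h => by
    show s1 n k - (n : ℤ) * s1 n (k + 1) = 0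
    rw [s1_eq_zero n k (by omega), s1_eq_zero n (k + 1) (by omega)]
    ring

lemma s1_eq_cyc : ∀ n k, k ≤ n → s1 n k = (-1 : ℤ) ^ (n - k) * cyc n k
  | 0, 0, _ => rfl
  | 0, k + 1, h => by omega
  | n + 1, 0, h => by
    show (0 : ℤ) = _
    rw [show cyc (n + 1) 0 = 0 from rfl]
    simp
  | n + 1, k + 1, h => by
    show s1 n k - (n : ℤ) * s1 n (k + 1) = _
    rw [show cyc (n + 1) (k + 1) = cyc n k + n * cyc n (k + 1) from rfl]
    rcases Nat.lt_or_ge n (k + 1) with h' | h'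
    · have hk : k = n := by omega
      rw [hk, s1_eq_cyc n n le_rfl, s1_eq_zero n (n + 1) (by omega),
        cyc_eq_zero n (n + 1) (by omega), cyc_self]
      simp
    · rw [s1_eq_cyc n k (by omega), s1_eq_cyc n (k + 1) h']
      have e : n - k = (n - (k + 1)) + 1 := by omega
      have e2 : (n+1) - (k+1) = n - k := by omega
      rw [e2, e]
      push_cast
      ring

lemma alt_partial : ∀ M B : ℕ, 1 ≤ B →
    ∑ i ∈ range (M + 1), (-1 : ℤ) ^ i * B.choose (M - i) = (B - 1).choose M := by
  intro M
  induction M with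
  | zero => intro B hB; simp
  | succ M ih =>
    intro B hB
    obtain ⟨B, rfl⟩ : ∃ B', B = B' + 1 := ⟨B - 1, by omega⟩
    rw [Finset.sum_range_succ']
    have hpt : ∀ i ∈ range (M + 1),
        (-1 : ℤ) ^ (i + 1) * (B + 1).choose (M + 1 - (i + 1))
          = -((-1 : ℤ) ^ i * (B + 1).choose (M - i)) := by
      intro i _
      rw [Nat.succ_sub_succ]
      push_cast
      ring
    rw [Finset.sum_congr rfl hpt, Finset.sum_neg_distrib, ih (B + 1) (by omega)]
    simp only [Nat.add_sub_cancel, pow_zero, Nat.sub_zero, one_mul]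
    rw [Nat.choose_succ_succ' B M]
    push_cast
    ring

lemma altVdm : ∀ M A B : ℕ, A < B →
    ∑ i ∈ range (M + 1), (-1 : ℤ) ^ i * ((A + i).choose i) * (B.choose (M - i))
      = (B - A - 1).choose M := by
  intro M
  induction M using Nat.strong_induction_on with
  | _ M ihM =>
    intro A B
    induction A with
    | zero =>
      intro hB
      have h := alt_partial M B (by omega)
      calc ∑ i ∈ range (M + 1), (-1 : ℤ) ^ i * ((0 + i).choose i) * (B.choose (M - i))
          = ∑ i ∈ range (M + 1), (-1 : ℤ) ^ i * (B.choose (M - i)) := by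
            refine Finset.sum_congr rfl fun i _ => ?_
            rw [Nat.zero_add, Nat.choose_self]
            push_cast; ring
        _ = (B - 1).choose M := h
        _ = (B - 0 - 1).choose M := by rw [Nat.sub_zero]
    | succ A ihA =>
      intro hB
      match M, ihM with
      | 0, _ => simp
      | M + 1, ihM =>
        have hS1 : ∑ i ∈ range (M + 1), (-1 : ℤ) ^ i * ((A + 1 + i).choose i) * (B.choose (M - i))
            = (B - (A + 1) - 1).choose M := ihM M (by omega) (A + 1) B hB
        have hA := ihA (by omega)
        rw [Finset.sum_range_succ'] at hA ⊢
        have hpt : ∀ i ∈ range (M + 1),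
            (-1 : ℤ) ^ (i + 1) * ((A + 1 + (i + 1)).choose (i + 1)) * (B.choose (M + 1 - (i + 1)))
              = -((-1 : ℤ) ^ i * ((A + 1 + i).choose i) * (B.choose (M - i)))
                - ((-1 : ℤ) ^ i * ((A + 1 + i).choose (i + 1)) * (B.choose (M - i))) := by
          intro i _
          rw [Nat.succ_sub_succ, show A + 1 + (i + 1) = (A + 1 + i) + 1 by omega,
            Nat.choose_succ_succ' (A + 1 + i) i]
          push_cast
          ring
        have hpt2 : ∀ i ∈ range (M + 1),
            (-1 : ℤ) ^ (i + 1) * ((A + (i + 1)).choose (i + 1)) * (B.choose (M + 1 - (i + 1)))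
              = -((-1 : ℤ) ^ i * ((A + 1 + i).choose (i + 1)) * (B.choose (M - i))) := by
          intro i _
          rw [Nat.succ_sub_succ, show A + (i + 1) = A + 1 + i by omega]
          push_cast
          ring
        rw [Finset.sum_congr rfl hpt, Finset.sum_congr rfl hpt2] at *
        rw [Finset.sum_sub_distrib, Finset.sum_neg_distrib] at *
        -- hA : -(S2) + f0 = C(B-A-1, M+1) ; goal: -S1 - S2 + f0 = C(B-A-2,M+1)
        have pas : ((B - A - 1).choose (M + 1) : ℤ)
            = (B - (A + 1) - 1).choose M + (B - (A + 1) - 1).choose (M + 1) := by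
          have : B - A - 1 = (B - (A + 1) - 1) + 1 := by omega
          rw [this, Nat.choose_succ_succ']
          push_cast; ring
        rw [hS1]
        simp only [pow_zero, one_mul, Nat.add_zero, Nat.choose_zero_right, Nat.sub_zero,
          Nat.cast_one] at hA ⊢
        linarith [pas, hA]

lemma s2_eq_W : ∀ a b, b ≤ a →
    s2 a b = ∑ i ∈ range (b + 1), (a.choose i : ℤ) * (W (a - i) (b - i) : ℤ) := by
  intro a
  induction a with
  | zero =>
    intro b hb
    interval_cases b
    show (1 : ℤ) = _
    simp [W]
  | succ a ih =>
    intro b hb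
    match b with
    | 0 =>
      show (0 : ℤ) = _
      simp [W_pos_zero]
    | b + 1 =>
      rcases Nat.lt_or_ge a (b + 1) with hba | hba
      · -- diagonal case : b = a
        have hbe : a = b := by omega
        subst hbe
        show s2 (a + 1) (a + 1) = _
        rw [s2_self, Finset.sum_range_succ]
        rw [Finset.sum_eq_zero (fun i hi => ?_)]
        · norm_num [W]
        · have hi' : i < a + 1 := Finset.mem_range.mp hi
          rw [W_eq_zero (a + 1 - i) (a + 1 - i) (by omega)]
          simp
      · -- main case : b + 1 ≤ a
        show s2 a b + ((b : ℤ) + 1) * s2 a (b + 1) = _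
        rw [ih b (by omega), ih (b + 1) hba]
        set A := ∑ i ∈ range (b + 1), (a.choose i : ℤ) * (W (a - i) (b - i) : ℤ) with hA
        set B := ∑ i ∈ range (b + 2), (a.choose i : ℤ) * (W (a - i) (b + 1 - i) : ℤ) with hB
        -- the three auxiliary sums
        have hLX : (∑ i ∈ range (b + 2), ((a + 1).choose i : ℤ) * (W (a + 1 - i) (b + 1 - i) : ℤ))
            - (∑ i ∈ range (b + 2), (a.choose i : ℤ) * (W (a + 1 - i) (b + 1 - i) : ℤ)) = A := by
          rw [← Finset.sum_sub_distrib, Finset.sum_range_succ']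
          have hpt : ∀ i ∈ range (b + 1),
              (((a + 1).choose (i + 1) : ℤ) * (W (a + 1 - (i + 1)) (b + 1 - (i + 1)) : ℤ)
                - (a.choose (i + 1) : ℤ) * (W (a + 1 - (i + 1)) (b + 1 - (i + 1)) : ℤ))
              = (a.choose i : ℤ) * (W (a - i) (b - i) : ℤ) := by
            intro i _
            rw [Nat.succ_sub_succ, Nat.succ_sub_succ, Nat.choose_succ_succ' a i]
            push_cast
            ring
          rw [Finset.sum_congr rfl hpt]
          simp [hA]
        have hXsplit : (∑ i ∈ range (b + 2), (a.choose i : ℤ) * (W (a + 1 - i) (b + 1 - i) : ℤ))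
            = (∑ i ∈ range (b + 1),
                (a.choose i : ℤ) * (((b + 1 - i : ℕ) : ℤ) * (W (a - i) (b + 1 - i) : ℤ)))
              + (∑ i ∈ range (b + 1),
                (a.choose i : ℤ) * (((a - i : ℕ) : ℤ) * (W (a - 1 - i) (b - i) : ℤ))) := by
          rw [Finset.sum_range_succ,
            show a + 1 - (b + 1) = (a - (b + 1)) + 1 by omega, Nat.sub_self, W_pos_zero]
          rw [← Finset.sum_add_distrib]
          simp only [Nat.cast_zero, mul_zero, add_zero]
          refine Finset.sum_congr rfl fun i hi => ?_
          have hi' : i ≤ b := by simpa [Nat.lt_succ_iff] using hi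
          have e1 : a + 1 - i = (a - 1 - i) + 2 := by omega
          have e2 : b + 1 - i = (b - i) + 1 := by omega
          have e3 : a - i = (a - 1 - i) + 1 := by omega
          rw [e1, e2, e3]
          rw [show W ((a - 1 - i) + 2) ((b - i) + 1)
              = ((b - i) + 1) * W ((a - 1 - i) + 1) ((b - i) + 1)
                + ((a - 1 - i) + 1) * W (a - 1 - i) (b - i) from rfl]
          push_cast
          ring
        have hX2 : (∑ i ∈ range (b + 1),
              (a.choose i : ℤ) * (((a - i : ℕ) : ℤ) * (W (a - 1 - i) (b - i) : ℤ)))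
            = ∑ i ∈ range (b + 2), (i : ℤ) * (a.choose i : ℤ) * (W (a - i) (b + 1 - i) : ℤ) := by
          conv_rhs => rw [Finset.sum_range_succ']
          simp only [Nat.cast_zero, zero_mul, add_zero]
          refine Finset.sum_congr rfl fun i hi => ?_
          have hi' : i ≤ b := by simpa [Nat.lt_succ_iff] using hi
          have habs : (a.choose (i + 1)) * (i + 1) = a.choose i * (a - i) :=
            Nat.choose_succ_right_eq a i
          have e1 : a - (i + 1) = a - 1 - i := by omega
          have e2 : b + 1 - (i + 1) = b - i := by omega
          have hcast : ((a - i : ℕ) : ℤ) = ((a - 1 - i : ℕ) : ℤ) + 1 := by omega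
          rw [e1, e2, hcast]
          have hc : ((a.choose (i + 1) : ℤ)) * ((i : ℤ) + 1)
              = (a.choose i : ℤ) * (((a - 1 - i : ℕ) : ℤ) + 1) := by
            have h := congrArg (fun t : ℕ => (t : ℤ)) habs
            push_cast at h
            rw [hcast] at h
            linarith [h]
          push_cast
          linear_combination (-(W (a - 1 - i) (b - i) : ℤ)) * hc
        have hX1 : (∑ i ∈ range (b + 1),
              (a.choose i : ℤ) * (((b + 1 - i : ℕ) : ℤ) * (W (a - i) (b + 1 - i) : ℤ)))
            = ∑ i ∈ range (b + 2), ((b + 1 - i : ℕ) : ℤ) * (a.choose i : ℤ) * (W (a - i) (b + 1 - i) : ℤ) := by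
          conv_rhs => rw [Finset.sum_range_succ]
          rw [Nat.sub_self]
          simp only [Nat.cast_zero, zero_mul, add_zero]
          refine Finset.sum_congr rfl fun i _ => ?_
          ring
        have hsum : (∑ i ∈ range (b + 2), ((b + 1 - i : ℕ) : ℤ) * (a.choose i : ℤ) * (W (a - i) (b + 1 - i) : ℤ))
            + (∑ i ∈ range (b + 2), (i : ℤ) * (a.choose i : ℤ) * (W (a - i) (b + 1 - i) : ℤ))
            = ((b : ℤ) + 1) * B := by
          rw [← Finset.sum_add_distrib, hB, Finset.mul_sum]
          refine Finset.sum_congr rfl fun i hi => ?_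
          have hi' : i ≤ b + 1 := by simpa [Nat.lt_succ_iff] using hi
          have : ((b + 1 - i : ℕ) : ℤ) = (b : ℤ) + 1 - (i : ℤ) := by
            push_cast [Nat.cast_sub hi']
            ring
          rw [this]
          ring
        linarith [hLX, hXsplit, hX2, hX1, hsum]

lemma cyc_eq_W : ∀ n m, m ≤ n → (-1 : ℤ) ^ m * (cyc n (n - m) : ℤ)
    = ∑ j ∈ range (m + 1), (-1 : ℤ) ^ j * ((n - 1 + j).choose (m + j) : ℤ) * (W (m + j) j : ℤ) := by
  intro n
  induction n with
  | zero =>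
    intro m hm
    interval_cases m
    simp [cyc, W]
  | succ n ih =>
    intro m hm
    match m with
    | 0 => simp [cyc_self, W]
    | m + 1 =>
      rcases Nat.lt_or_ge n (m + 1) with hmn | hmn
      · -- m = n : both sides vanish
        have : n + 1 - (m + 1) = 0 := by omega
        rw [this, show (cyc (n + 1) 0 : ℤ) = 0 by rw [show cyc (n + 1) 0 = 0 from rfl]; simp]
        rw [Finset.sum_eq_zero]
        · ring
        · intro j hj
          rw [Nat.choose_eq_zero_of_lt (by omega)]
          simp
      · -- main case : m + 1 ≤ n
        have e : n + 1 - (m + 1) = (n - (m + 1)) + 1 := by omega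
        rw [e, show cyc (n + 1) ((n - (m + 1)) + 1)
            = cyc n (n - (m + 1)) + n * cyc n ((n - (m + 1)) + 1) from rfl,
          show (n - (m + 1)) + 1 = n - m by omega]
        have ih1 := ih (m + 1) hmn
        have ih0 := ih m (by omega)
        -- express LHS via the two IH sums
        have hL : (-1 : ℤ) ^ (m + 1) * ((cyc n (n - (m + 1)) : ℤ) + n * (cyc n (n - m) : ℤ))
            = (∑ j ∈ range (m + 2), (-1 : ℤ) ^ j * ((n - 1 + j).choose (m + 1 + j) : ℤ) * (W (m + 1 + j) j : ℤ))
              - n * ∑ j ∈ range (m + 1), (-1 : ℤ) ^ j * ((n - 1 + j).choose (m + j) : ℤ) * (W (m + j) j : ℤ) := by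
          rw [← ih1, ← ih0]
          push_cast
          ring
        push_cast
        push_cast at hL
        rw [hL]
        -- now prove : RHS(n+1) = RHS(n) - n * R(n,m)
        rw [sub_eq_iff_eq_add, ← sub_eq_iff_eq_add']
        -- goal : Σ_{j<m+2} (-1)^j C(n+j, m+1+j) W(m+1+j,j) - Σ_{j<m+2} (-1)^j C(n-1+j, m+1+j) W(m+1+j,j)
        --        = -n Σ ...
        have hD : (∑ j ∈ range (m + 2), (-1 : ℤ) ^ j * ((n + j).choose (m + 1 + j) : ℤ) * (W (m + 1 + j) j : ℤ))
            - (∑ j ∈ range (m + 2), (-1 : ℤ) ^ j * ((n - 1 + j).choose (m + 1 + j) : ℤ) * (W (m + 1 + j) j : ℤ))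
            = ∑ j ∈ range (m + 2), (-1 : ℤ) ^ j * ((n - 1 + j).choose (m + j) : ℤ) * (W (m + 1 + j) j : ℤ) := by
          rw [← Finset.sum_sub_distrib]
          refine Finset.sum_congr rfl fun j _ => ?_
          have e1 : n + j = (n - 1 + j) + 1 := by omega
          have e2 : m + 1 + j = (m + j) + 1 := by omega
          rw [e1, e2, Nat.choose_succ_succ' (n - 1 + j) (m + j)]
          push_cast
          ring
        have hstep : (∑ j ∈ range (m + 2), (-1 : ℤ) ^ j * ((n - 1 + j).choose (m + j) : ℤ) * (W (m + 1 + j) j : ℤ))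
            = ∑ j ∈ range (m + 1),
                (-1 : ℤ) ^ (j + 1) * ((n + j).choose (m + 1 + j) : ℤ) * (W (m + 2 + j) (j + 1) : ℤ) := by
          rw [Finset.sum_range_succ']
          rw [show m + 0 = m by omega, show n - 1 + 0 = n - 1 by omega, show m + 1 + 0 = m + 1 by omega,
            W_pos_zero m]
          simp only [Nat.cast_zero, mul_zero, add_zero]
          refine Finset.sum_congr rfl fun j _ => ?_
          rw [show n - 1 + (j + 1) = n + j by omega, show m + (j + 1) = m + 1 + j by omega,
            show m + 1 + (j + 1) = m + 2 + j by omega]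
        have hWrec : ∀ j : ℕ, W (m + 2 + j) (j + 1) = (j + 1) * W (m + 1 + j) (j + 1) + (m + 1 + j) * W (m + j) j := by
          intro j
          rw [show m + 2 + j = (m + j) + 2 by omega, show m + 1 + j = (m + j) + 1 by omega]
          rfl
        have hsplit : (∑ j ∈ range (m + 1),
              (-1 : ℤ) ^ (j + 1) * ((n + j).choose (m + 1 + j) : ℤ) * (W (m + 2 + j) (j + 1) : ℤ))
            = -(∑ j ∈ range (m + 1),
                (-1 : ℤ) ^ j * ((j : ℤ) + 1) * ((n + j).choose (m + 1 + j) : ℤ) * (W (m + 1 + j) (j + 1) : ℤ))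
              - (∑ j ∈ range (m + 1),
                (-1 : ℤ) ^ j * ((m : ℤ) + 1 + j) * ((n + j).choose (m + 1 + j) : ℤ) * (W (m + j) j : ℤ)) := by
          rw [← Finset.sum_neg_distrib, ← Finset.sum_sub_distrib]
          refine Finset.sum_congr rfl fun j _ => ?_
          rw [hWrec j]
          push_cast
          ring
        have hE : (∑ j ∈ range (m + 1),
              (-1 : ℤ) ^ j * ((j : ℤ) + 1) * ((n + j).choose (m + 1 + j) : ℤ) * (W (m + 1 + j) (j + 1) : ℤ))
            = -(∑ t ∈ range (m + 1), (-1 : ℤ) ^ t * (t : ℤ) * ((n - 1 + t).choose (m + t) : ℤ) * (W (m + t) t : ℤ)) := by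
          have hG2 : (∑ t ∈ range (m + 2), (-1 : ℤ) ^ t * (t : ℤ) * ((n - 1 + t).choose (m + t) : ℤ) * (W (m + t) t : ℤ))
              = -(∑ j ∈ range (m + 1),
                (-1 : ℤ) ^ j * ((j : ℤ) + 1) * ((n + j).choose (m + 1 + j) : ℤ) * (W (m + 1 + j) (j + 1) : ℤ)) := by
            rw [Finset.sum_range_succ', ← Finset.sum_neg_distrib]
            simp only [Nat.cast_zero, mul_zero, zero_mul, add_zero]
            refine Finset.sum_congr rfl fun j _ => ?_
            rw [show n - 1 + (j + 1) = n + j by omega, show m + (j + 1) = m + 1 + j by omega]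
            push_cast
            ring
          have hG2' : (∑ t ∈ range (m + 2), (-1 : ℤ) ^ t * (t : ℤ) * ((n - 1 + t).choose (m + t) : ℤ) * (W (m + t) t : ℤ))
              = ∑ t ∈ range (m + 1), (-1 : ℤ) ^ t * (t : ℤ) * ((n - 1 + t).choose (m + t) : ℤ) * (W (m + t) t : ℤ) := by
            rw [Finset.sum_range_succ, W_eq_zero (m + (m + 1)) (m + 1) (by omega)]
            simp
          rw [← hG2', hG2]
          ring
        have hF : ∀ j ∈ range (m + 1),
            (-1 : ℤ) ^ j * ((m : ℤ) + 1 + j) * ((n + j).choose (m + 1 + j) : ℤ) * (W (m + j) j : ℤ)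
              = (-1 : ℤ) ^ j * ((n : ℤ) + j) * ((n - 1 + j).choose (m + j) : ℤ) * (W (m + j) j : ℤ) := by
          intro j _
          have habs : (n - 1 + j + 1) * ((n - 1 + j).choose (m + j))
              = ((n - 1 + j + 1).choose (m + j + 1)) * (m + j + 1) := Nat.add_one_mul_choose_eq (n - 1 + j) (m + j)
          rw [show n - 1 + j + 1 = n + j by omega, show m + j + 1 = m + 1 + j by omega] at habs
          have habs' : ((n : ℤ) + j) * ((n - 1 + j).choose (m + j) : ℤ)
              = ((n + j).choose (m + 1 + j) : ℤ) * ((m : ℤ) + 1 + j) := by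
            have h := congrArg (fun t : ℕ => (t : ℤ)) habs
            push_cast at h
            convert h using 2 <;> push_cast <;> ring
          linear_combination (-(-1 : ℤ) ^ j * (W (m + j) j : ℤ)) * habs'
        rw [hstep, hsplit, hE, Finset.sum_congr rfl hF] at hD
        have hval : (∑ t ∈ range (m + 1), (-1 : ℤ) ^ t * (t : ℤ) * ((n - 1 + t).choose (m + t) : ℤ) * (W (m + t) t : ℤ))
            - (∑ j ∈ range (m + 1), (-1 : ℤ) ^ j * ((n : ℤ) + j) * ((n - 1 + j).choose (m + j) : ℤ) * (W (m + j) j : ℤ))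
            = -((n : ℤ) * ∑ j ∈ range (m + 1), (-1 : ℤ) ^ j * ((n - 1 + j).choose (m + j) : ℤ) * (W (m + j) j : ℤ)) := by
          rw [Finset.mul_sum, ← Finset.sum_neg_distrib, ← Finset.sum_sub_distrib]
          refine Finset.sum_congr rfl fun j _ => ?_
          ring
        simp only [show m + 1 + 1 = m + 2 from rfl]
        linarith [hD, hval]

lemma triangle_swap (m : ℕ) (F : ℕ → ℕ → ℤ) :
    ∑ j ∈ range (m + 1), ∑ i ∈ range (j + 1), F j i
      = ∑ p ∈ range (m + 1), ∑ i ∈ range (m - p + 1), F (p + i) i := by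
  induction m with
  | zero => simp
  | succ m ih =>
    rw [Finset.sum_range_succ, ih]
    have hsplit : ∀ p ∈ range (m + 1),
        (∑ i ∈ range (m + 1 - p + 1), F (p + i) i)
          = (∑ i ∈ range (m - p + 1), F (p + i) i) + F (m + 1) (m + 1 - p) := by
      intro p hp
      have hp' : p ≤ m := by simpa [Nat.lt_succ_iff] using hp
      rw [show m + 1 - p + 1 = (m - p + 1) + 1 by omega, Finset.sum_range_succ,
        show p + (m - p + 1) = m + 1 by omega, show m - p + 1 = m + 1 - p by omega]
    have h1 : (∑ p ∈ range (m + 1), F (m + 1) (m + 1 - p))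
        = ∑ p ∈ range (m + 1), F (m + 1) (p + 1) := by
      have hre := Finset.sum_range_reflect (fun j => F (m + 1) (j + 1)) (m + 1)
      rw [← hre]
      refine Finset.sum_congr rfl fun p hp => ?_
      have hp' : p ≤ m := by simpa [Nat.lt_succ_iff] using hp
      congr 1
      omega
    conv_rhs => rw [Finset.sum_range_succ]
    rw [Finset.sum_congr rfl hsplit, Finset.sum_add_distrib, h1]
    rw [show m + 1 - (m + 1) + 1 = 1 by omega, Finset.sum_range_one,
      show m + 1 + 0 = m + 1 by omega]
    rw [Finset.sum_range_succ' (fun i => F (m + 1) i) (m + 1)]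
    ring

lemma altVdm_one (A M : ℕ) :
    ∑ i ∈ range (M + 1), (-1 : ℤ) ^ i * ((A + i).choose i) * ((A + M + 1).choose (M - i)) = 1 := by
  rw [altVdm M A (A + M + 1) (by omega), show A + M + 1 - A - 1 = M by omega, Nat.choose_self,
    Nat.cast_one]

theorem schloemilch (n k : ℕ) (hk : 1 ≤ k) (hkn : k ≤ n) :
    s1 n k = ∑ r ∈ Finset.Icc (k - 1) (n - 1),
      (-1 : ℤ) ^ (n - 1 - r) * ((2 * n - 2 - r).choose (k - 1)) *
        ((2 * n - k).choose (r + 1 - k)) * s2 (2 * n - 1 - k - r) (n - 1 - r) := by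
  set m := n - k with hmdef
  have hmn : m ≤ n := by omega
  rw [show Finset.Icc (k - 1) (n - 1) = Finset.Ico (k - 1) n by
      rw [← Finset.Ico_add_one_right_eq_Icc]; congr 1; omega]
  rw [Finset.sum_Ico_eq_sum_range, show n - (k - 1) = m + 1 by omega,
    ← Finset.sum_range_reflect]
  simp only [Nat.add_sub_cancel]
  have hterm : ∀ j ∈ range (m + 1),
      (-1 : ℤ) ^ (n - 1 - (k - 1 + (m - j))) * ((2 * n - 2 - (k - 1 + (m - j))).choose (k - 1)) *
          ((2 * n - k).choose (k - 1 + (m - j) + 1 - k)) *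
          s2 (2 * n - 1 - k - (k - 1 + (m - j))) (n - 1 - (k - 1 + (m - j)))
        = (-1 : ℤ) ^ j * ((n - 1 + j).choose (m + j)) * ((n + m).choose (m - j)) *
            ∑ i ∈ range (j + 1), ((m + j).choose i : ℤ) * (W (m + j - i) (j - i) : ℤ) := by
    intro j hj
    have hj' : j ≤ m := by simpa [Nat.lt_succ_iff] using hj
    rw [show n - 1 - (k - 1 + (m - j)) = j by omega,
      show 2 * n - 2 - (k - 1 + (m - j)) = n - 1 + j by omega,
      show k - 1 + (m - j) + 1 - k = m - j by omega,
      show 2 * n - 1 - k - (k - 1 + (m - j)) = m + j by omega,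
      show 2 * n - k = n + m by omega,
      Nat.choose_symm_of_eq_add (show n - 1 + j = (k - 1) + (m + j) by omega),
      s2_eq_W (m + j) j (by omega)]
  rw [Finset.sum_congr rfl hterm]
  have hmulsum : ∀ j ∈ range (m + 1),
      (-1 : ℤ) ^ j * ((n - 1 + j).choose (m + j)) * ((n + m).choose (m - j)) *
          (∑ i ∈ range (j + 1), ((m + j).choose i : ℤ) * (W (m + j - i) (j - i) : ℤ))
        = ∑ i ∈ range (j + 1),
            (-1 : ℤ) ^ j * ((n - 1 + j).choose (m + j)) * ((n + m).choose (m - j)) *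
              (((m + j).choose i : ℤ) * (W (m + j - i) (j - i) : ℤ)) := by
    intro j _
    rw [Finset.mul_sum]
  rw [Finset.sum_congr rfl hmulsum]
  rw [triangle_swap m (fun j i =>
    (-1 : ℤ) ^ j * ((n - 1 + j).choose (m + j)) * ((n + m).choose (m - j)) *
      (((m + j).choose i : ℤ) * (W (m + j - i) (j - i) : ℤ)))]
  have hinner : ∀ p ∈ range (m + 1),
      (∑ i ∈ range (m - p + 1),
        (-1 : ℤ) ^ (p + i) * ((n - 1 + (p + i)).choose (m + (p + i))) *
          ((n + m).choose (m - (p + i))) *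
          (((m + (p + i)).choose i : ℤ) * (W (m + (p + i) - i) (p + i - i) : ℤ)))
        = (-1 : ℤ) ^ p * ((n - 1 + p).choose (m + p)) * (W (m + p) p : ℤ) := by
    intro p hp
    have hp' : p ≤ m := by simpa [Nat.lt_succ_iff] using hp
    have hpt : ∀ i ∈ range (m - p + 1),
        (-1 : ℤ) ^ (p + i) * ((n - 1 + (p + i)).choose (m + (p + i))) *
          ((n + m).choose (m - (p + i))) *
          (((m + (p + i)).choose i : ℤ) * (W (m + (p + i) - i) (p + i - i) : ℤ))
        = ((-1 : ℤ) ^ p * ((n - 1 + p).choose (m + p)) * (W (m + p) p : ℤ)) *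
            ((-1 : ℤ) ^ i * ((n - 1 + p + i).choose i) *
              ((n - 1 + p + (m - p) + 1).choose (m - p - i))) := by
      intro i hi
      have hi' : i ≤ m - p := by simpa [Nat.lt_succ_iff] using hi
      have hcm := Nat.choose_mul (n := n - 1 + (p + i)) (k := m + (p + i))
        (show i ≤ m + (p + i) by omega)
      rw [show n - 1 + (p + i) - i = n - 1 + p by omega,
        show m + (p + i) - i = m + p by omega] at hcm
      rw [show m + (p + i) - i = m + p by omega, show p + i - i = p by omega,
        show m - (p + i) = m - p - i by omega,
        show n + m = n - 1 + p + (m - p) + 1 by omega,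
        show n - 1 + (p + i) = n - 1 + p + i by omega]
      rw [show n - 1 + (p + i) = n - 1 + p + i by omega] at hcm
      have hcast := congrArg (fun t : ℕ => (t : ℤ)) hcm
      push_cast at hcast
      rw [pow_add]
      push_cast
      linear_combination ((-1 : ℤ) ^ p * (-1 : ℤ) ^ i * (W (m + p) p : ℤ) *
        ((n - 1 + p + (m - p) + 1).choose (m - p - i) : ℤ)) * hcast
    rw [Finset.sum_congr rfl hpt, ← Finset.mul_sum, altVdm_one (n - 1 + p) (m - p), mul_one]
  rw [Finset.sum_congr rfl hinner, ← cyc_eq_W n m hmn, show n - m = k by omega,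
    s1_eq_cyc n k hkn]
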